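/- Fix y ∈ ℝⁿ, X ∈ ℝ^{n×p}, D ∈ ℝ^{m×p} and λ > 0. Suppose that (i) for every boundary set B associated with an optimal subgradient of the generalized lasso problem, null(X) ∩ null(D_{−B}) = {0}, and (ii) the subspace null(D_{−B}) is the same for all boundary sets B associated with optimal subgradients. Then the generalized lasso problem has a unique solution. -/

import Mathlib

open Matrix

/-- The generalized lasso criterion `f(β) = (1/2)‖y − Xβ‖₂² + λ‖Dβ‖₁`. -/
noncomputable def glCrit (n p m : ℕ) (y : Fin n → ℝ) (X : Matrix (Fin n) (Fin p) ℝ)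
    (D : Matrix (Fin m) (Fin p) ℝ) (lam : ℝ) (β : Fin p → ℝ) : ℝ :=
  (1 / 2) * ∑ i, (y i - X.mulVec β i) ^ 2 + lam * ∑ i, |D.mulVec β i|

/-- A solution of the generalized lasso problem: a global minimizer. -/
def IsGLSol (n p m : ℕ) (y : Fin n → ℝ) (X : Matrix (Fin n) (Fin p) ℝ)
    (D : Matrix (Fin m) (Fin p) ℝ) (lam : ℝ) (β : Fin p → ℝ) : Prop :=
  ∀ β' : Fin p → ℝ, glCrit n p m y X D lam β ≤ glCrit n p m y X D lam β'


/-- `γ̂` is an optimal subgradient: together with some solution `β̂` it satisfies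
the KKT conditions `Xᵀ(y − Xβ̂) = λ Dᵀ γ̂`, with `γ̂ᵢ = sign((Dβ̂)ᵢ)` when
`(Dβ̂)ᵢ ≠ 0` and `γ̂ᵢ ∈ [−1,1]` when `(Dβ̂)ᵢ = 0`. -/
noncomputable def IsOptSubgrad (n p m : ℕ) (y : Fin n → ℝ) (X : Matrix (Fin n) (Fin p) ℝ)
    (D : Matrix (Fin m) (Fin p) ℝ) (lam : ℝ) (γ : Fin m → ℝ) : Prop :=
  ∃ β : Fin p → ℝ, IsGLSol n p m y X D lam β ∧
    X.transpose.mulVec (y - X.mulVec β) = lam • D.transpose.mulVec γ ∧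
    ∀ i : Fin m,
      (D.mulVec β i ≠ 0 → γ i = Real.sign (D.mulVec β i)) ∧
      (D.mulVec β i = 0 → γ i ∈ Set.Icc (-1 : ℝ) 1)

/-- The boundary set of a subgradient `γ`: coordinates achieving absolute value 1. -/
def boundarySet (m : ℕ) (γ : Fin m → ℝ) : Set (Fin m) := {i | |γ i| = 1}

/-- The null space of `D_{−B}`, i.e. `{β : (Dβ)ᵢ = 0 for all i ∉ B}`. -/
def nullDminus (m p : ℕ) (D : Matrix (Fin m) (Fin p) ℝ) (B : Set (Fin m)) :
    Set (Fin p → ℝ) :=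
  {β | ∀ i ∉ B, D.mulVec β i = 0}

lemma dotT {a b : ℕ} (A : Matrix (Fin a) (Fin b) ℝ) (u : Fin a → ℝ) (v : Fin b → ℝ) :
    (A.transpose.mulVec u) ⬝ᵥ v = u ⬝ᵥ (A.mulVec v) := by
  rw [Matrix.mulVec_transpose, ← Matrix.dotProduct_mulVec]

lemma sign_mul_self' (x : ℝ) : Real.sign x * x = |x| := by
  rcases lt_trichotomy x 0 with h | h | h
  · rw [Real.sign_of_neg h, abs_of_neg h]; ring
  · simp [h]
  · rw [Real.sign_of_pos h, abs_of_pos h]; ring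

lemma abs_sign_le_one (x : ℝ) : |Real.sign x| ≤ 1 := by
  rcases lt_trichotomy x 0 with h | h | h
  · simp [Real.sign_of_neg h]
  · simp [h]
  · simp [Real.sign_of_pos h]

lemma abs_add_small (a d t : ℝ) (ht : 0 < t) (h : a ≠ 0 → t * |d| < |a|) :
    |a + t * d| = |a| + t * (if a = 0 then |d| else Real.sign a * d) := by
  rcases eq_or_ne a 0 with h0 | h0
  · simp [h0, abs_mul, abs_of_pos ht]
  have hd := h h0
  rcases lt_trichotomy a 0 with hn | hz | hp
  · have h1 : t * d ≤ t * |d| := by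
      have := le_abs_self d; nlinarith
    have : a + t * d < 0 := by rw [abs_of_neg hn] at hd; linarith
    rw [abs_of_neg this, abs_of_neg hn, Real.sign_of_neg hn, if_neg h0]; ring
  · exact absurd hz h0
  · have h1 : -(t * d) ≤ t * |d| := by
      have := neg_abs_le d; nlinarith
    have : 0 < a + t * d := by rw [abs_of_pos hp] at hd; linarith
    rw [abs_of_pos this, abs_of_pos hp, Real.sign_of_pos hp, if_neg h0]; ring

lemma glCrit_expand (n p m : ℕ) (y : Fin n → ℝ) (X : Matrix (Fin n) (Fin p) ℝ)
    (D : Matrix (Fin m) (Fin p) ℝ) (lam : ℝ) (β η : Fin p → ℝ) (t : ℝ) (ht : 0 < t)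
    (hsmall : ∀ i, D.mulVec β i ≠ 0 → t * |D.mulVec η i| < |D.mulVec β i|) :
    glCrit n p m y X D lam (β + t • η) =
      glCrit n p m y X D lam β
      + t * (lam * (∑ i, if D.mulVec β i = 0 then |D.mulVec η i|
              else Real.sign (D.mulVec β i) * D.mulVec η i) - (y - X.mulVec β) ⬝ᵥ X.mulVec η)
      + t ^ 2 * ((1 / 2) * ∑ i, (X.mulVec η i) ^ 2) := by
  unfold glCrit
  rw [Matrix.mulVec_add, Matrix.mulVec_add, Matrix.mulVec_smul, Matrix.mulVec_smul]
  have q : ∑ i, (y i - (X.mulVec β + t • X.mulVec η) i) ^ 2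
      = ∑ i, (y i - X.mulVec β i) ^ 2 - 2 * t * ∑ i, (y i - X.mulVec β i) * X.mulVec η i
        + t ^ 2 * ∑ i, (X.mulVec η i) ^ 2 := by
    rw [Finset.mul_sum, Finset.mul_sum, ← Finset.sum_sub_distrib, ← Finset.sum_add_distrib]
    refine Finset.sum_congr rfl fun i _ => ?_
    simp only [Pi.add_apply, Pi.smul_apply, smul_eq_mul]
    ring
  have l1 : ∑ i, |(D.mulVec β + t • D.mulVec η) i|
      = ∑ i, |D.mulVec β i| + t * ∑ i, (if D.mulVec β i = 0 then |D.mulVec η i|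
          else Real.sign (D.mulVec β i) * D.mulVec η i) := by
    rw [Finset.mul_sum, ← Finset.sum_add_distrib]
    refine Finset.sum_congr rfl fun i _ => ?_
    simp only [Pi.add_apply, Pi.smul_apply, smul_eq_mul]
    exact abs_add_small _ _ _ ht (hsmall i)
  have dp : (y - X.mulVec β) ⬝ᵥ X.mulVec η = ∑ i, (y i - X.mulVec β i) * X.mulVec η i := by
    simp [dotProduct]
  rw [q, l1, dp]; ring

lemma gl_dd (n p m : ℕ) (y : Fin n → ℝ) (X : Matrix (Fin n) (Fin p) ℝ)
    (D : Matrix (Fin m) (Fin p) ℝ) (lam : ℝ) (β : Fin p → ℝ)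
    (hβ : ∀ β', glCrit n p m y X D lam β ≤ glCrit n p m y X D lam β') (η : Fin p → ℝ) :
    (y - X.mulVec β) ⬝ᵥ X.mulVec η ≤
      lam * ∑ i, (if D.mulVec β i = 0 then |D.mulVec η i|
        else Real.sign (D.mulVec β i) * D.mulVec η i) := by
  set a := D.mulVec β with ha
  set d := D.mulVec η with hd
  set F : Fin m → ℝ := fun i => if a i = 0 then 1 else |a i| / (2 * (|d i| + 1)) with hF
  set s : Finset ℝ := insert 1 (Finset.image F Finset.univ) with hsdef
  have hs : s.Nonempty := ⟨1, Finset.mem_insert_self _ _⟩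
  set t₀ := s.min' hs with ht₀def
  have hFpos : ∀ i, 0 < F i := by
    intro i
    by_cases h : a i = 0
    · simp [hF, h]
    · simp only [hF, if_neg h]
      apply div_pos (abs_pos.mpr h); positivity
  have ht₀pos : 0 < t₀ := by
    have hmem := s.min'_mem hs
    rcases Finset.mem_insert.mp hmem with h | h
    · rw [← ht₀def] at h; rw [h]; norm_num
    · obtain ⟨i, _, hFi⟩ := Finset.mem_image.mp h
      rw [← ht₀def] at hFi; rw [← hFi]; exact hFpos i
  have hsmall : ∀ t, 0 < t → t ≤ t₀ → ∀ i, a i ≠ 0 → t * |d i| < |a i| := by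
    intro t ht htle i hai
    have hle : t₀ ≤ F i := s.min'_le _ (Finset.mem_insert_of_mem
      (Finset.mem_image_of_mem F (Finset.mem_univ i)))
    have hFi : F i = |a i| / (2 * (|d i| + 1)) := if_neg hai
    have hA : 0 < |a i| := abs_pos.mpr hai
    have hdd : 0 ≤ |d i| := abs_nonneg _
    have h2 : (0:ℝ) < 2 * (|d i| + 1) := by positivity
    have h3 : t * |d i| ≤ (|a i| / (2 * (|d i| + 1))) * |d i| := by
      apply mul_le_mul_of_nonneg_right _ hdd
      calc t ≤ t₀ := htle
        _ ≤ F i := hle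
        _ = _ := hFi
    have h4 : (|a i| / (2 * (|d i| + 1))) * |d i| < |a i| := by
      rw [div_mul_eq_mul_div, div_lt_iff₀ h2]
      nlinarith
    linarith
  set A := lam * (∑ i, if a i = 0 then |d i| else Real.sign (a i) * d i)
      - (y - X.mulVec β) ⬝ᵥ X.mulVec η with hA
  set C := (1 / 2) * ∑ i, (X.mulVec η i) ^ 2 with hC
  have hCnn : 0 ≤ C := by positivity
  have key : ∀ t, 0 < t → t ≤ t₀ → 0 ≤ t * A + t ^ 2 * C := by
    intro t ht htle
    have := glCrit_expand n p m y X D lam β η t ht (hsmall t ht htle)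
    have h2 := hβ (β + t • η)
    rw [this] at h2
    rw [hA, hC]
    linarith
  by_contra hcon
  push_neg at hcon
  have hAneg : A < 0 := by rw [hA]; linarith
  set t := min t₀ (-A / (2 * (C + 1))) with htdef
  have ht : 0 < t := by
    apply lt_min ht₀pos
    apply div_pos (by linarith) (by linarith)
  have h1 : t * (2 * (C + 1)) ≤ -A := by
    rw [← le_div_iff₀ (by linarith : (0:ℝ) < 2 * (C + 1))]
    exact min_le_right _ _
  have hk := key t ht (min_le_left _ _)
  nlinarith [mul_pos ht ht, mul_nonneg (le_of_lt ht) hCnn]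
lemma gl_kkt (n p m : ℕ) (y : Fin n → ℝ) (X : Matrix (Fin n) (Fin p) ℝ)
    (D : Matrix (Fin m) (Fin p) ℝ) (lam : ℝ) (β : Fin p → ℝ)
    (hβ : ∀ β', glCrit n p m y X D lam β ≤ glCrit n p m y X D lam β') :
    ∃ γ : Fin m → ℝ, (∀ i, |γ i| ≤ 1) ∧
      (∀ i, D.mulVec β i ≠ 0 → γ i = Real.sign (D.mulVec β i)) ∧
      X.transpose.mulVec (y - X.mulVec β) = lam • D.transpose.mulVec γ := by
  set a := D.mulVec β with hadef
  set Γ : Set (Fin m → ℝ) := {γ | ∀ i, |γ i| ≤ 1 ∧ (a i ≠ 0 → γ i = Real.sign (a i))} with hΓdef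
  set L : (Fin m → ℝ) →ₗ[ℝ] (Fin p → ℝ) := lam • Matrix.mulVecLin D.transpose with hLdef
  have hLapp : ∀ γ, L γ = lam • D.transpose.mulVec γ := fun γ => rfl
  set K := L '' Γ with hKdef
  set c := X.transpose.mulVec (y - X.mulVec β) with hcdef
  suffices h : c ∈ K by
    obtain ⟨γ, hγ, hLγ⟩ := h
    exact ⟨γ, fun i => (hγ i).1, fun i => (hγ i).2, by rw [← hLγ, hLapp]⟩
  have hΓconv : Convex ℝ Γ := by
    intro γ₁ h1 γ₂ h2 s t hs ht hst
    intro i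
    constructor
    · calc |(s • γ₁ + t • γ₂) i| = |s * γ₁ i + t * γ₂ i| := rfl
        _ ≤ |s * γ₁ i| + |t * γ₂ i| := abs_add_le _ _
        _ = s * |γ₁ i| + t * |γ₂ i| := by
            rw [abs_mul, abs_mul, abs_of_nonneg hs, abs_of_nonneg ht]
        _ ≤ s * 1 + t * 1 := by
            gcongr
            exacts [(h1 i).1, (h2 i).1]
        _ = 1 := by linarith
    · intro hai
      have e1 := (h1 i).2 hai
      have e2 := (h2 i).2 hai
      show s * γ₁ i + t * γ₂ i = _
      rw [e1, e2, ← add_mul, hst, one_mul]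
  have hΓcl : IsClosed Γ := by
    have : Γ = ⋂ i, ({γ : Fin m → ℝ | |γ i| ≤ 1} ∩ {γ | a i ≠ 0 → γ i = Real.sign (a i)}) := by
      ext γ; simp only [hΓdef, Set.mem_setOf_eq, Set.mem_iInter, Set.mem_inter_iff]
    rw [this]
    refine isClosed_iInter fun i => IsClosed.inter ?_ ?_
    · exact isClosed_le ((continuous_apply i).abs) continuous_const
    · by_cases h : a i = 0
      · convert isClosed_univ using 1
        ext γ; simp [h]
      · have : IsClosed {γ : Fin m → ℝ | γ i = Real.sign (a i)} :=
          isClosed_eq (continuous_apply i) continuous_const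
        convert this using 1
        ext γ; simp [h]
  have hΓbd : Bornology.IsBounded Γ := by
    apply Bornology.IsBounded.subset (Metric.isBounded_closedBall (x := (0 : Fin m → ℝ)) (r := 1))
    intro γ hγ
    rw [Metric.mem_closedBall, dist_zero_right]
    rw [pi_norm_le_iff_of_nonneg zero_le_one]
    intro i
    rw [Real.norm_eq_abs]
    exact (hγ i).1
  have hΓcp : IsCompact Γ := Metric.isCompact_of_isClosed_isBounded hΓcl hΓbd
  have hKcp : IsCompact K := hΓcp.image L.continuous_of_finiteDimensional
  have hKconv : Convex ℝ K := hΓconv.linear_image L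
  by_contra hc
  obtain ⟨f, u, hfu, hufc⟩ := geometric_hahn_banach_closed_point hKconv hKcp.isClosed hc
  set η : Fin p → ℝ := fun j => f (fun k => if j = k then (1:ℝ) else 0) with hηdef
  have hfv : ∀ v : Fin p → ℝ, f v = v ⬝ᵥ η := by
    intro v
    conv_lhs => rw [pi_eq_sum_univ v]
    rw [map_sum]
    simp only [ContinuousLinearMap.map_smul, smul_eq_mul, dotProduct, hηdef]
  set d := D.mulVec η with hddef
  set γ' : Fin m → ℝ := fun i => if a i = 0 then Real.sign (d i) else Real.sign (a i) with hγ'def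
  have hγ'Γ : γ' ∈ Γ := by
    intro i
    constructor
    · by_cases h : a i = 0
      · simp only [hγ'def, if_pos h]; exact abs_sign_le_one _
      · simp only [hγ'def, if_neg h]; exact abs_sign_le_one _
    · intro h; simp only [hγ'def, if_neg h]
  have hw : L γ' ∈ K := Set.mem_image_of_mem _ hγ'Γ
  have hfw : f (L γ') = lam * ∑ i, (if a i = 0 then |d i| else Real.sign (a i) * d i) := by
    rw [hfv, hLapp, smul_dotProduct, dotT]
    congr 1
    simp only [dotProduct, ← hddef]
    refine Finset.sum_congr rfl fun i _ => ?_
    by_cases h : a i = 0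
    · simp only [hγ'def, h, if_true]
      exact sign_mul_self' _
    · simp only [hγ'def, if_neg h]
  have hfc : f c = (y - X.mulVec β) ⬝ᵥ X.mulVec η := by
    rw [hfv, hcdef, dotT]
  have hdd := gl_dd n p m y X D lam β hβ η
  have h1 := hfu _ hw
  rw [hfw] at h1
  rw [hfc] at hufc
  rw [← hadef, ← hddef] at hdd
  linarith
lemma gl_exists (n p m : ℕ) (y : Fin n → ℝ) (X : Matrix (Fin n) (Fin p) ℝ)
    (D : Matrix (Fin m) (Fin p) ℝ) (lam : ℝ) (hlam : 0 < lam) :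
    ∃ β : Fin p → ℝ, ∀ β', glCrit n p m y X D lam β ≤ glCrit n p m y X D lam β' := by
  set g : (Fin n → ℝ) × (Fin m → ℝ) → ℝ :=
    fun v => (1 / 2) * ∑ i, (y i - v.1 i) ^ 2 + lam * ∑ i, |v.2 i| with hgdef
  have hgl : ∀ b : Fin p → ℝ, glCrit n p m y X D lam b = g (X.mulVec b, D.mulVec b) := by
    intro b; rfl
  set T : (Fin p → ℝ) →ₗ[ℝ] (Fin n → ℝ) × (Fin m → ℝ) :=
    LinearMap.prod (Matrix.mulVecLin X) (Matrix.mulVecLin D) with hTdef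
  have hTapp : ∀ b, T b = (X.mulVec b, D.mulVec b) := fun b => rfl
  set M : ℝ := (1 / 2) * ∑ i, (y i) ^ 2 with hMdef
  have hMnn : 0 ≤ M := by positivity
  have hg0 : g (T 0) = M := by
    simp [hTapp, hgdef, Matrix.mulVec_zero, hMdef]
  set S₀ : Set ((Fin n → ℝ) × (Fin m → ℝ)) :=
    (LinearMap.range T : Set _) ∩ g ⁻¹' (Set.Iic M) with hS₀def
  have hgcont : Continuous g := by
    apply Continuous.add
    · apply Continuous.mul continuous_const
      apply continuous_finset_sum
      intro i _
      exact (continuous_const.sub ((continuous_apply i).comp continuous_fst)).pow 2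
    · apply Continuous.mul continuous_const
      apply continuous_finset_sum
      intro i _
      exact ((continuous_apply i).comp continuous_snd).abs
  have hScl : IsClosed S₀ :=
    (Submodule.closed_of_finiteDimensional (LinearMap.range T)).inter
      (isClosed_Iic.preimage hgcont)
  have hSbd : Bornology.IsBounded S₀ := by
    set R : ℝ := max (‖y‖ + Real.sqrt (2 * M)) (M / lam) with hRdef
    have hRnn : 0 ≤ R := le_trans (by positivity) (le_max_left _ _)
    apply Bornology.IsBounded.subset (Metric.isBounded_closedBall
      (x := (0 : (Fin n → ℝ) × (Fin m → ℝ))) (r := R))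
    rintro ⟨u, v⟩ ⟨-, hv⟩
    have hq : (1 / 2) * ∑ i, (y i - u i) ^ 2 + lam * ∑ i, |v i| ≤ M := hv
    have hl1nn : 0 ≤ ∑ i, |v i| := Finset.sum_nonneg fun i _ => abs_nonneg _
    have hqnn : 0 ≤ ∑ i, (y i - u i) ^ 2 := Finset.sum_nonneg fun i _ => sq_nonneg _
    rw [Metric.mem_closedBall, dist_zero_right, Prod.norm_def]
    apply max_le
    · rw [pi_norm_le_iff_of_nonneg hRnn]
      intro i
      have h1 : (y i - u i) ^ 2 ≤ 2 * M := by
        have h0 := Finset.single_le_sum (f := fun j => (y j - u j) ^ 2)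
          (fun j _ => sq_nonneg _) (Finset.mem_univ i)
        nlinarith
      have h2 : |y i - u i| ≤ Real.sqrt (2 * M) := by
        rw [← Real.sqrt_sq_eq_abs]
        exact Real.sqrt_le_sqrt h1
      have h3 : |y i| ≤ ‖y‖ := by
        rw [← Real.norm_eq_abs]
        exact norm_le_pi_norm y i
      rw [Real.norm_eq_abs]
      calc |u i| = |y i - (y i - u i)| := by ring_nf
        _ ≤ |y i| + |y i - u i| := abs_sub _ _
        _ ≤ ‖y‖ + Real.sqrt (2 * M) := add_le_add h3 h2
        _ ≤ R := le_max_left _ _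
    · rw [pi_norm_le_iff_of_nonneg hRnn]
      intro i
      have h1 : |v i| ≤ ∑ j, |v j| :=
        Finset.single_le_sum (f := fun j => |v j|) (fun j _ => abs_nonneg _) (Finset.mem_univ i)
      have h2 : ∑ j, |v j| ≤ M / lam := by
        rw [le_div_iff₀ hlam]
        nlinarith
      rw [Real.norm_eq_abs]
      calc |v i| ≤ M / lam := le_trans h1 h2
        _ ≤ R := le_max_right _ _
  have hScp : IsCompact S₀ := Metric.isCompact_of_isClosed_isBounded hScl hSbd
  have hT0S : T 0 ∈ S₀ := ⟨⟨0, rfl⟩, by simp only [Set.mem_preimage, hg0, Set.mem_Iic, le_refl]⟩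
  have hSne : S₀.Nonempty := ⟨T 0, hT0S⟩
  obtain ⟨v₀, hv₀S, hmin⟩ := hScp.exists_isMinOn hSne hgcont.continuousOn
  obtain ⟨⟨β₀, hβ₀⟩, hv₀M⟩ := hv₀S
  refine ⟨β₀, fun β' => ?_⟩
  rw [hgl, hgl]
  have hTβ₀ : (X.mulVec β₀, D.mulVec β₀) = v₀ := by rw [← hTapp]; exact hβ₀
  rw [hTβ₀]
  by_cases h : g (X.mulVec β', D.mulVec β') ≤ M
  · exact hmin ⟨⟨β', hTapp β'⟩, h⟩
  · push_neg at h
    have h2 : g v₀ ≤ g (T 0) := hmin hT0S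
    rw [hg0] at h2
    linarith
lemma gl_fit_eq (n p m : ℕ) (y : Fin n → ℝ) (X : Matrix (Fin n) (Fin p) ℝ)
    (D : Matrix (Fin m) (Fin p) ℝ) (lam : ℝ) (hlam : 0 < lam) (β₁ β₂ : Fin p → ℝ)
    (h₁ : ∀ β', glCrit n p m y X D lam β₁ ≤ glCrit n p m y X D lam β')
    (h₂ : ∀ β', glCrit n p m y X D lam β₂ ≤ glCrit n p m y X D lam β') :
    X.mulVec β₁ = X.mulVec β₂ ∧ ∑ i, |D.mulVec β₁ i| = ∑ i, |D.mulVec β₂ i| := by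
  have heq : glCrit n p m y X D lam β₁ = glCrit n p m y X D lam β₂ :=
    le_antisymm (h₁ β₂) (h₂ β₁)
  set mid : Fin p → ℝ := (1 / 2 : ℝ) • (β₁ + β₂) with hmiddef
  have hXmid : X.mulVec mid = (1 / 2 : ℝ) • (X.mulVec β₁ + X.mulVec β₂) := by
    rw [hmiddef, Matrix.mulVec_smul, Matrix.mulVec_add]
  have hDmid : D.mulVec mid = (1 / 2 : ℝ) • (D.mulVec β₁ + D.mulVec β₂) := by
    rw [hmiddef, Matrix.mulVec_smul, Matrix.mulVec_add]
  have e1 : ∑ i, (y i - X.mulVec mid i) ^ 2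
      = (1 / 2) * ∑ i, (y i - X.mulVec β₁ i) ^ 2 + (1 / 2) * ∑ i, (y i - X.mulVec β₂ i) ^ 2
        - (1 / 4) * ∑ i, (X.mulVec β₁ i - X.mulVec β₂ i) ^ 2 := by
    rw [Finset.mul_sum, Finset.mul_sum, Finset.mul_sum, ← Finset.sum_add_distrib,
      ← Finset.sum_sub_distrib]
    refine Finset.sum_congr rfl fun i _ => ?_
    rw [hXmid]
    simp only [Pi.smul_apply, Pi.add_apply, smul_eq_mul]
    ring
  have e2 : ∑ i, |D.mulVec mid i|
      ≤ (1 / 2) * ∑ i, |D.mulVec β₁ i| + (1 / 2) * ∑ i, |D.mulVec β₂ i| := by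
    rw [Finset.mul_sum, Finset.mul_sum, ← Finset.sum_add_distrib]
    refine Finset.sum_le_sum fun i _ => ?_
    rw [hDmid]
    simp only [Pi.smul_apply, Pi.add_apply, smul_eq_mul]
    calc |1 / 2 * (D.mulVec β₁ i + D.mulVec β₂ i)|
        = 1 / 2 * |D.mulVec β₁ i + D.mulVec β₂ i| := by rw [abs_mul]; norm_num
      _ ≤ 1 / 2 * (|D.mulVec β₁ i| + |D.mulVec β₂ i|) := by
          have := abs_add_le (D.mulVec β₁ i) (D.mulVec β₂ i); linarith
      _ = _ := by ring
  have hmid := h₁ mid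
  unfold glCrit at heq hmid
  rw [e1] at hmid
  have hS : ∑ i, (X.mulVec β₁ i - X.mulVec β₂ i) ^ 2 ≤ 0 := by nlinarith
  have hS0 : ∑ i, (X.mulVec β₁ i - X.mulVec β₂ i) ^ 2 = 0 :=
    le_antisymm hS (Finset.sum_nonneg fun i _ => sq_nonneg _)
  have hfit : X.mulVec β₁ = X.mulVec β₂ := by
    funext i
    have := (Finset.sum_eq_zero_iff_of_nonneg (fun i _ => sq_nonneg
      (X.mulVec β₁ i - X.mulVec β₂ i))).mp hS0 i (Finset.mem_univ i)
    have h2 : X.mulVec β₁ i - X.mulVec β₂ i = 0 := by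
      have := sq_eq_zero_iff.mp this
      exact this
    linarith
  refine ⟨hfit, ?_⟩
  rw [hfit] at heq
  have := mul_left_cancel₀ (ne_of_gt hlam) (by linarith : lam * ∑ i, |D.mulVec β₁ i|
    = lam * ∑ i, |D.mulVec β₂ i|)
  exact this

theorem generalized_lasso_unique_under_rank_and_invariance_conditions
    (n p m : ℕ) (y : Fin n → ℝ) (X : Matrix (Fin n) (Fin p) ℝ)
    (D : Matrix (Fin m) (Fin p) ℝ) (lam : ℝ) (hlam : 0 < lam)
    (h₁ : ∀ γ : Fin m → ℝ, IsOptSubgrad n p m y X D lam γ →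
      ∀ β : Fin p → ℝ, X.mulVec β = 0 →
        β ∈ nullDminus m p D (boundarySet m γ) → β = 0)
    (h₂ : ∀ γ₁ γ₂ : Fin m → ℝ, IsOptSubgrad n p m y X D lam γ₁ →
      IsOptSubgrad n p m y X D lam γ₂ →
      nullDminus m p D (boundarySet m γ₁) = nullDminus m p D (boundarySet m γ₂)) :
    ∃! β : Fin p → ℝ, IsGLSol n p m y X D lam β := by
  obtain ⟨βh, hβh⟩ := gl_exists n p m y X D lam hlam
  obtain ⟨γ, hγle, hγsign, hkkt⟩ := gl_kkt n p m y X D lam βh hβh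
  have hsol : IsGLSol n p m y X D lam βh := hβh
  have hopt : IsOptSubgrad n p m y X D lam γ :=
    ⟨βh, hsol, hkkt, fun i => ⟨hγsign i, fun _ => Set.mem_Icc.mpr (abs_le.mp (hγle i))⟩⟩
  have hzero : ∀ β'' : Fin p → ℝ, X.mulVec β'' = X.mulVec βh →
      (∑ i, |D.mulVec β'' i| = ∑ i, |D.mulVec βh i|) →
      ∀ i, |γ i| ≠ 1 → D.mulVec β'' i = 0 := by
    intro β'' hf hl i hi
    have s1 : ∑ j, γ j * D.mulVec βh j = ∑ j, |D.mulVec βh j| := by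
      refine Finset.sum_congr rfl fun j _ => ?_
      by_cases h : D.mulVec βh j = 0
      · simp [h]
      · rw [hγsign j h, sign_mul_self']
    have hz : X.mulVec (β'' - βh) = 0 := by rw [Matrix.mulVec_sub, hf, sub_self]
    have h0 : lam * (γ ⬝ᵥ D.mulVec (β'' - βh)) = 0 := by
      calc lam * (γ ⬝ᵥ D.mulVec (β'' - βh))
          = (lam • D.transpose.mulVec γ) ⬝ᵥ (β'' - βh) := by
            rw [smul_dotProduct, dotT, smul_eq_mul]
        _ = (X.transpose.mulVec (y - X.mulVec βh)) ⬝ᵥ (β'' - βh) := by rw [hkkt]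
        _ = (y - X.mulVec βh) ⬝ᵥ X.mulVec (β'' - βh) := dotT _ _ _
        _ = 0 := by rw [hz, dotProduct_zero]
    have h1 : γ ⬝ᵥ D.mulVec (β'' - βh) = 0 :=
      (mul_eq_zero.mp h0).resolve_left (ne_of_gt hlam)
    rw [Matrix.mulVec_sub, dotProduct_sub] at h1
    have s2 : γ ⬝ᵥ D.mulVec β'' = γ ⬝ᵥ D.mulVec βh := by linarith
    have s3 : ∑ j, γ j * D.mulVec β'' j = ∑ j, |D.mulVec β'' j| := by
      calc ∑ j, γ j * D.mulVec β'' j = γ ⬝ᵥ D.mulVec β'' := rfl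
        _ = γ ⬝ᵥ D.mulVec βh := s2
        _ = ∑ j, γ j * D.mulVec βh j := rfl
        _ = ∑ j, |D.mulVec βh j| := s1
        _ = ∑ j, |D.mulVec β'' j| := hl.symm
    have hterm : ∀ j ∈ Finset.univ, γ j * D.mulVec β'' j ≤ |D.mulVec β'' j| := by
      intro j _
      calc γ j * D.mulVec β'' j ≤ |γ j * D.mulVec β'' j| := le_abs_self _
        _ = |γ j| * |D.mulVec β'' j| := abs_mul _ _
        _ ≤ 1 * |D.mulVec β'' j| := mul_le_mul_of_nonneg_right (hγle j) (abs_nonneg _)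
        _ = |D.mulVec β'' j| := one_mul _
    have heq := (Finset.sum_eq_sum_iff_of_le hterm).mp s3 i (Finset.mem_univ i)
    have hlt : |γ i| < 1 := lt_of_le_of_ne (hγle i) hi
    by_contra hw
    have habs : 0 < |D.mulVec β'' i| := abs_pos.mpr hw
    have h5 : γ i * D.mulVec β'' i ≤ |γ i| * |D.mulVec β'' i| := by
      calc γ i * D.mulVec β'' i ≤ |γ i * D.mulVec β'' i| := le_abs_self _
        _ = |γ i| * |D.mulVec β'' i| := abs_mul _ _
    nlinarith
  refine ⟨βh, hsol, fun β' hβ' => ?_⟩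
  obtain ⟨hfit, hl1⟩ := gl_fit_eq n p m y X D lam hlam β' βh hβ' hβh
  have hz1 : ∀ i, |γ i| ≠ 1 → D.mulVec β' i = 0 := hzero β' hfit hl1
  have hz2 : ∀ i, |γ i| ≠ 1 → D.mulVec βh i = 0 := hzero βh rfl rfl
  have hXδ : X.mulVec (β' - βh) = 0 := by rw [Matrix.mulVec_sub, hfit, sub_self]
  have hδmem : (β' - βh) ∈ nullDminus m p D (boundarySet m γ) := by
    intro i hi
    have hi' : |γ i| ≠ 1 := hi
    rw [Matrix.mulVec_sub, Pi.sub_apply, hz1 i hi', hz2 i hi', sub_self]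
  have := h₁ γ hopt (β' - βh) hXδ hδmem
  exact sub_eq_zero.mp this
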